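/- Consider a discrete-time switched linear system as in the context. Let τ ≥ 1 and let w : {0,…,τ} → 𝒫 be a closed walk, i.e., w(τ) = w(0). Define the counts over W: ρ_{kℓ}(W) := #{i < τ : w(i) = k, w(i+1) = ℓ} for ordered pairs k ≠ ℓ, and κ_j(W) := #{i < τ : w(i) = j}; set N(W) := Σ_{k≠ℓ} (ln μ_{kℓ}) ρ_{kℓ}(W) + Σ_{j ∈ 𝒫_U} (ln λ_j) κ_j(W) and D(W) := Σ_{j ∈ 𝒫_AS} |ln λ_j| κ_j(W). Suppose D(W) > 0 and N(W) < D(W). Define the periodic switching signal σ(t) := w(t mod τ). Then limsup_{t→∞} g₂(t)/g₁(t) = N(W)/D(W) < 1, where g₁ and g₂ are formed from σ as in the context. -/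

import Mathlib

open Filter Matrix

/-- The quadratic Lyapunov-like function `V_P(z) = ⟨P z, z⟩` on `ℝ^d`. -/
noncomputable def lyap {d : ℕ} (P : Matrix (Fin d) (Fin d) ℝ)
    (z : EuclideanSpace ℝ (Fin d)) : ℝ :=
  (inner ℝ (Matrix.toEuclideanLin P z) z : ℝ)

/-- `ρ_{kℓ}(t)`: the number of transitions from `k` to `ℓ` before (and including) `t`. -/
def transCount {ι : Type*} [DecidableEq ι] (σ : ℕ → ι) (k l : ι) (t : ℕ) : ℕ :=
  ((Finset.Icc 1 t).filter fun s => σ (s - 1) = k ∧ σ s = l).card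

/-- `κ_j(t)`: the number of time steps in `{0,…,t-1}` at which subsystem `j` is active. -/
def actCount {ι : Type*} [DecidableEq ι] (σ : ℕ → ι) (j : ι) (t : ℕ) : ℕ :=
  ((Finset.range t).filter fun s => σ s = j).card

/-- `g₁(t) = Σ_{j ∈ 𝒫_AS} |ln λ_j| κ_j(t)`. -/
noncomputable def gOne {ι : Type*} [Fintype ι] [DecidableEq ι]
    (lam : ι → ℝ) (σ : ℕ → ι) (t : ℕ) : ℝ :=
  ∑ j ∈ Finset.univ.filter (fun j => lam j < 1), |Real.log (lam j)| * (actCount σ j t : ℝ)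

/-- `g₂(t) = Σ_{k ≠ ℓ} (ln μ_{kℓ}) ρ_{kℓ}(t) + Σ_{j ∈ 𝒫_U} (ln λ_j) κ_j(t)`. -/
noncomputable def gTwo {ι : Type*} [Fintype ι] [DecidableEq ι]
    (lam : ι → ℝ) (mu : ι → ι → ℝ) (σ : ℕ → ι) (t : ℕ) : ℝ :=
  (∑ k, ∑ l ∈ Finset.univ.filter (fun l => l ≠ k),
      Real.log (mu k l) * (transCount σ k l t : ℝ))
    + ∑ j ∈ Finset.univ.filter (fun j => 1 < lam j),
        Real.log (lam j) * (actCount σ j t : ℝ)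

/-- `ρ_{kℓ}(W)`: number of steps of the walk `w` of length `τ` going from `k` to `ℓ`. -/
def walkTrans {ι : Type*} [DecidableEq ι] (w : ℕ → ι) (τ : ℕ) (k l : ι) : ℕ :=
  ((Finset.range τ).filter fun i => w i = k ∧ w (i + 1) = l).card

/-- `κ_j(W)`: number of indices `i < τ` with `w i = j`. -/
def walkAct {ι : Type*} [DecidableEq ι] (w : ℕ → ι) (τ : ℕ) (j : ι) : ℕ :=
  ((Finset.range τ).filter fun i => w i = j).card

/-- `N(W) = Σ_{k≠ℓ} (ln μ_{kℓ}) ρ_{kℓ}(W) + Σ_{j ∈ 𝒫_U} (ln λ_j) κ_j(W)`. -/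
noncomputable def walkN {ι : Type*} [Fintype ι] [DecidableEq ι]
    (lam : ι → ℝ) (mu : ι → ι → ℝ) (w : ℕ → ι) (τ : ℕ) : ℝ :=
  (∑ k, ∑ l ∈ Finset.univ.filter (fun l => l ≠ k),
      Real.log (mu k l) * (walkTrans w τ k l : ℝ))
    + ∑ j ∈ Finset.univ.filter (fun j => 1 < lam j),
        Real.log (lam j) * (walkAct w τ j : ℝ)

/-- `D(W) = Σ_{j ∈ 𝒫_AS} |ln λ_j| κ_j(W)`. -/
noncomputable def walkD {ι : Type*} [Fintype ι] [DecidableEq ι]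
    (lam : ι → ℝ) (w : ℕ → ι) (τ : ℕ) : ℝ :=
  ∑ j ∈ Finset.univ.filter (fun j => lam j < 1), |Real.log (lam j)| * (walkAct w τ j : ℝ)


section AuxSwitched

open Filter

private lemma shift_card' (p : ℕ → Prop) [DecidablePred p] (τ a b : ℕ)
    (hp : ∀ s, a ≤ s → (p (s + τ) ↔ p s)) :
    ((Finset.Ico (a + τ) (b + τ)).filter p).card = ((Finset.Ico a b).filter p).card := by
  apply Finset.card_bij' (fun s _ => s - τ) (fun s _ => s + τ)
  · intro s hs
    simp only [Finset.mem_filter, Finset.mem_Ico] at *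
    have h1 : a ≤ s - τ := by omega
    have := hp (s - τ) h1
    refine ⟨by omega, ?_⟩
    rw [← this]
    have h2 : s - τ + τ = s := by omega
    rw [h2]; exact hs.2
  · intro s hs
    simp only [Finset.mem_filter, Finset.mem_Ico] at *
    exact ⟨⟨by omega, by omega⟩, (hp s hs.1.1).mpr hs.2⟩
  · intro s hs; simp only [Finset.mem_filter, Finset.mem_Ico] at hs; omega
  · intro s hs; simp only [Finset.mem_filter, Finset.mem_Ico] at hs; omega

private lemma split_card' (p : ℕ → Prop) [DecidablePred p] (a b c : ℕ)
    (hab : a ≤ b) (hbc : b ≤ c) :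
    ((Finset.Ico a c).filter p).card
      = ((Finset.Ico a b).filter p).card + ((Finset.Ico b c).filter p).card := by
  rw [← Finset.card_union_of_disjoint, ← Finset.filter_union, Finset.Ico_union_Ico_eq_Ico hab hbc]
  exact Finset.disjoint_filter_filter (Finset.Ico_disjoint_Ico_consecutive a b c)

variable {ι : Type*} [DecidableEq ι]

private lemma actCount_add' (w : ℕ → ι) (τ : ℕ) (j : ι) (t : ℕ) :
    actCount (fun s => w (s % τ)) j (t + τ)
      = actCount (fun s => w (s % τ)) j t + walkAct w τ j := by
  unfold actCount walkAct
  simp only [Finset.range_eq_Ico]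
  rw [split_card' _ 0 τ (t + τ) (by omega) (by omega)]
  have h2 : (Finset.Ico τ (t+τ)) = Finset.Ico (0 + τ) (t + τ) := by norm_num
  rw [h2, shift_card' _ τ 0 t (fun s _ => by simp [Nat.add_mod_right])]
  have h3 : ∀ s ∈ Finset.Ico 0 τ,
      ((fun s => w (s % τ)) s = j) ↔ (w s = j) := by
    intro s hs
    simp only [Finset.mem_Ico] at hs
    simp [Nat.mod_eq_of_lt hs.2]
  rw [Finset.filter_congr h3]
  ring

private lemma transCount_add' (w : ℕ → ι) (τ : ℕ) (hτ : 1 ≤ τ) (hclosed : w τ = w 0)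
    (k l : ι) (t : ℕ) :
    transCount (fun s => w (s % τ)) k l (t + τ)
      = transCount (fun s => w (s % τ)) k l t + walkTrans w τ k l := by
  unfold transCount walkTrans
  have hIcc : ∀ m : ℕ, Finset.Icc 1 m = Finset.Ico 1 (m + 1) := fun m =>
    (Finset.Ico_add_one_right_eq_Icc 1 m).symm
  rw [hIcc, hIcc, split_card' _ 1 (τ + 1) (t + τ + 1) (by omega) (by omega)]
  have h2 : Finset.Ico (τ + 1) (t + τ + 1) = Finset.Ico (1 + τ) (t + 1 + τ) := by
    congr 1 <;> omega
  rw [h2, shift_card' _ τ 1 (t + 1) ?_]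
  · have h3 : ((Finset.Ico 1 (τ + 1)).filter
        (fun s => (fun s => w (s % τ)) (s - 1) = k ∧ (fun s => w (s % τ)) s = l)).card
        = ((Finset.range τ).filter fun i => w i = k ∧ w (i + 1) = l).card := by
      refine Finset.card_bij' (fun s _ => s - 1) (fun i _ => i + 1) ?_ ?_
        (fun s hs => ?_) (fun i hi => ?_)
      · intro s hs
        rw [Finset.mem_filter, Finset.mem_Ico] at hs
        obtain ⟨⟨h1s, h2s⟩, hk, hl⟩ := hs
        rw [Finset.mem_filter, Finset.mem_range]
        simp only at hk hl
        have hlt : s - 1 < τ := by omega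
        refine ⟨hlt, ?_, ?_⟩
        · rwa [Nat.mod_eq_of_lt hlt] at hk
        · have e : s - 1 + 1 = s := by omega
          rw [e]
          rcases Nat.lt_or_ge s τ with h | h
          · rwa [Nat.mod_eq_of_lt h] at hl
          · have hsτ : s = τ := by omega
            subst hsτ
            rw [Nat.mod_self] at hl
            rwa [hclosed]
      · intro i hi
        rw [Finset.mem_filter, Finset.mem_range] at hi
        obtain ⟨hi, hk, hl⟩ := hi
        rw [Finset.mem_filter, Finset.mem_Ico]
        simp only
        have e1 : i + 1 - 1 = i := by omega
        refine ⟨⟨by omega, by omega⟩, by rw [e1, Nat.mod_eq_of_lt hi]; exact hk, ?_⟩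
        rcases Nat.lt_or_ge (i + 1) τ with h | h
        · rw [Nat.mod_eq_of_lt h]; exact hl
        · have e2 : i + 1 = τ := by omega
          rw [e2, Nat.mod_self, ← hclosed, ← e2]; exact hl
      · rw [Finset.mem_filter, Finset.mem_Ico] at hs
        show s - 1 + 1 = s
        omega
      · simp
    rw [h3]
    ring
  · intro s hs
    simp only
    have e1 : s + τ - 1 = (s - 1) + τ := by omega
    rw [e1, Nat.add_mod_right, Nat.add_mod_right]

variable [Fintype ι]

private lemma gOne_add' (lam : ι → ℝ) (w : ℕ → ι) (τ : ℕ) (t : ℕ) :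
    gOne lam (fun s => w (s % τ)) (t + τ)
      = gOne lam (fun s => w (s % τ)) t + walkD lam w τ := by
  unfold gOne walkD
  rw [← Finset.sum_add_distrib]
  refine Finset.sum_congr rfl fun j _ => ?_
  rw [actCount_add' w τ j t]
  push_cast
  ring

private lemma gTwo_add' (lam : ι → ℝ) (mu : ι → ι → ℝ) (w : ℕ → ι) (τ : ℕ)
    (hτ : 1 ≤ τ) (hclosed : w τ = w 0) (t : ℕ) :
    gTwo lam mu (fun s => w (s % τ)) (t + τ)
      = gTwo lam mu (fun s => w (s % τ)) t + walkN lam mu w τ := by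
  unfold gTwo walkN
  have h1 : ∀ k, ∑ l ∈ Finset.univ.filter (fun l => l ≠ k),
      Real.log (mu k l) * (transCount (fun s => w (s % τ)) k l (t + τ) : ℝ)
      = ∑ l ∈ Finset.univ.filter (fun l => l ≠ k),
        (Real.log (mu k l) * (transCount (fun s => w (s % τ)) k l t : ℝ)
          + Real.log (mu k l) * (walkTrans w τ k l : ℝ)) := by
    intro k
    refine Finset.sum_congr rfl fun l _ => ?_
    rw [transCount_add' w τ hτ hclosed k l t]
    push_cast
    ring
  have h2 : ∀ j, Real.log (lam j) * (actCount (fun s => w (s % τ)) j (t + τ) : ℝ)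
      = Real.log (lam j) * (actCount (fun s => w (s % τ)) j t : ℝ)
        + Real.log (lam j) * (walkAct w τ j : ℝ) := by
    intro j
    rw [actCount_add' w τ j t]
    push_cast
    ring
  simp only [h1, h2, Finset.sum_add_distrib]
  ring

private lemma gOne_formula' (lam : ι → ℝ) (w : ℕ → ι) (τ : ℕ) (r q : ℕ) :
    gOne lam (fun s => w (s % τ)) (r + τ * q)
      = gOne lam (fun s => w (s % τ)) r + q * walkD lam w τ := by
  induction q with
  | zero => simp
  | succ n ih =>
    have e : r + τ * (n + 1) = (r + τ * n) + τ := by ring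
    rw [e, gOne_add' lam w τ, ih]
    push_cast
    ring

private lemma gTwo_formula' (lam : ι → ℝ) (mu : ι → ι → ℝ) (w : ℕ → ι) (τ : ℕ)
    (hτ : 1 ≤ τ) (hclosed : w τ = w 0) (r q : ℕ) :
    gTwo lam mu (fun s => w (s % τ)) (r + τ * q)
      = gTwo lam mu (fun s => w (s % τ)) r + q * walkN lam mu w τ := by
  induction q with
  | zero => simp
  | succ n ih =>
    have e : r + τ * (n + 1) = (r + τ * n) + τ := by ring
    rw [e, gTwo_add' lam mu w τ hτ hclosed, ih]
    push_cast
    ring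

private lemma gOne_nonneg' (lam : ι → ℝ) (σ : ℕ → ι) (t : ℕ) : 0 ≤ gOne lam σ t := by
  refine Finset.sum_nonneg fun j _ => ?_
  positivity

end AuxSwitched

/-- For the periodic switching signal obtained by repeating a closed walk `W` with
`D(W) > 0` and `N(W) < D(W)`, one has `limsup g₂/g₁ = N(W)/D(W) < 1`. -/
theorem periodic_signal_limsup_ratio
    {d : ℕ} {ι : Type*} [Fintype ι] [DecidableEq ι] [Nonempty ι]
    (A Pm : ι → Matrix (Fin d) (Fin d) ℝ)
    (hP : ∀ i, (Pm i).PosDef)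
    (lam : ι → ℝ) (hlam : ∀ i, 0 < lam i)
    (hV : ∀ i (ξ : EuclideanSpace ℝ (Fin d)),
      lyap (Pm i) (Matrix.toEuclideanLin (A i) ξ) ≤ lam i * lyap (Pm i) ξ)
    (mu : ι → ι → ℝ) (hmupos : ∀ i j, 0 < mu i j)
    (hmu : ∀ i j (ξ : EuclideanSpace ℝ (Fin d)),
      lyap (Pm j) ξ ≤ mu i j * lyap (Pm i) ξ)
    (τ : ℕ) (hτ : 1 ≤ τ) (w : ℕ → ι) (hclosed : w τ = w 0)
    (hD : 0 < walkD lam w τ)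
    (hND : walkN lam mu w τ < walkD lam w τ) :
    Filter.limsup
        (fun t => ((gTwo lam mu (fun s => w (s % τ)) t /
            gOne lam (fun s => w (s % τ)) t : ℝ) : EReal)) Filter.atTop =
        ((walkN lam mu w τ / walkD lam w τ : ℝ) : EReal) ∧
      walkN lam mu w τ / walkD lam w τ < 1 := by
  classical
  have hτ0 : 0 < τ := hτ
  set σ : ℕ → ι := fun s => w (s % τ) with hσ
  set N := walkN lam mu w τ with hN
  set D := walkD lam w τ with hDdef
  have key1 : ∀ t : ℕ, gOne lam σ t = gOne lam σ (t % τ) + ((t / τ : ℕ) : ℝ) * D := by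
    intro t
    conv_lhs => rw [← Nat.mod_add_div t τ]
    rw [hσ, gOne_formula' lam w τ]
  have key2 : ∀ t : ℕ, gTwo lam mu σ t
      = gTwo lam mu σ (t % τ) + ((t / τ : ℕ) : ℝ) * N := by
    intro t
    conv_lhs => rw [← Nat.mod_add_div t τ]
    rw [hσ, gTwo_formula' lam mu w τ hτ hclosed]
  set Q : ℕ → ℝ := fun t => ((t / τ : ℕ) : ℝ) with hQdef
  have hQ : Filter.Tendsto Q Filter.atTop Filter.atTop :=
    tendsto_natCast_atTop_atTop.comp (le_of_eq (Filter.map_div_atTop_eq_nat τ hτ0))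
  have hQnn : ∀ t, 0 ≤ Q t := fun t => Nat.cast_nonneg _
  -- bounds on the periodic parts
  set C1 : ℝ := ∑ r ∈ Finset.range τ, |gOne lam σ r| with hC1
  set C2 : ℝ := ∑ r ∈ Finset.range τ, |gTwo lam mu σ r| with hC2
  have hb1 : ∀ t : ℕ, |gOne lam σ (t % τ)| ≤ C1 := fun t =>
    Finset.single_le_sum (f := fun r => |gOne lam σ r|) (fun r _ => abs_nonneg _)
      (Finset.mem_range.mpr (Nat.mod_lt t hτ0))
  have hb2 : ∀ t : ℕ, |gTwo lam mu σ (t % τ)| ≤ C2 := fun t =>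
    Finset.single_le_sum (f := fun r => |gTwo lam mu σ r|) (fun r _ => abs_nonneg _)
      (Finset.mem_range.mpr (Nat.mod_lt t hτ0))
  have hdiv : ∀ (c : ℝ) (C : ℝ) (q : ℝ), |c| ≤ C → 0 ≤ q → |c / q| ≤ C / q := by
    intro c C q hc hq
    rcases eq_or_lt_of_le hq with h | h
    · simp [← h]
    · rw [abs_div, abs_of_pos h]
      gcongr
  have hz1 : Filter.Tendsto (fun t => gOne lam σ (t % τ) / Q t) Filter.atTop (nhds 0) := by
    refine squeeze_zero_norm (a := fun t => C1 / Q t) (fun t => ?_)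
      (Filter.Tendsto.div_atTop tendsto_const_nhds hQ)
    rw [Real.norm_eq_abs]
    exact hdiv _ _ _ (hb1 t) (hQnn t)
  have hz2 : Filter.Tendsto (fun t => gTwo lam mu σ (t % τ) / Q t) Filter.atTop (nhds 0) := by
    refine squeeze_zero_norm (a := fun t => C2 / Q t) (fun t => ?_)
      (Filter.Tendsto.div_atTop tendsto_const_nhds hQ)
    rw [Real.norm_eq_abs]
    exact hdiv _ _ _ (hb2 t) (hQnn t)
  have hnum : Filter.Tendsto (fun t => gTwo lam mu σ (t % τ) / Q t + N)
      Filter.atTop (nhds N) := by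
    have := hz2.add (tendsto_const_nhds (x := N))
    rwa [zero_add] at this
  have hden : Filter.Tendsto (fun t => gOne lam σ (t % τ) / Q t + D)
      Filter.atTop (nhds D) := by
    have := hz1.add (tendsto_const_nhds (x := D))
    rwa [zero_add] at this
  have hmain' : Filter.Tendsto
      (fun t => (gTwo lam mu σ (t % τ) / Q t + N) / (gOne lam σ (t % τ) / Q t + D))
      Filter.atTop (nhds (N / D)) := hnum.div hden (ne_of_gt hD)
  have hmain : Filter.Tendsto (fun t => gTwo lam mu σ t / gOne lam σ t)
      Filter.atTop (nhds (N / D)) := by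
    refine hmain'.congr' ?_
    filter_upwards [Filter.eventually_ge_atTop τ] with t ht
    have hq1 : 1 ≤ t / τ := (Nat.one_le_div_iff hτ0).mpr ht
    have hQ1 : (1 : ℝ) ≤ Q t := by
      show (1 : ℝ) ≤ ((t / τ : ℕ) : ℝ)
      exact_mod_cast hq1
    have hQpos : (0 : ℝ) < Q t := lt_of_lt_of_le one_pos hQ1
    have hg1r : 0 ≤ gOne lam σ (t % τ) := gOne_nonneg' lam σ (t % τ)
    rw [key1 t, key2 t]
    have hdenpos : 0 < gOne lam σ (t % τ) + Q t * D := by nlinarith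
    have hdenpos2 : 0 < gOne lam σ (t % τ) / Q t + D := by positivity
    rw [div_eq_div_iff (ne_of_gt hdenpos2) (ne_of_gt hdenpos)]
    field_simp
    ring
  have hE : Filter.Tendsto (fun t => ((gTwo lam mu σ t / gOne lam σ t : ℝ) : EReal))
      Filter.atTop (nhds ((N / D : ℝ) : EReal)) := EReal.tendsto_coe.mpr hmain
  exact ⟨hE.limsup_eq, (div_lt_one hD).mpr hND⟩
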